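/- For a submodular set function C : 2^{[k]} → ℝ with C(∅) = 0, the value of the MOT problem with Bernoulli marginals Ber(x₁),…,Ber(x_k) equals the Lovász extension of C evaluated at (x₁,…,x_k): if σ is a permutation of [k] with x_{σ(1)} ≥ ⋯ ≥ x_{σ(k)} and S_t = {σ(1),…,σ(t)}, then min_{P ∈ M(Ber(x₁),…,Ber(x_k))} E_{S∼P} C(S) = Σ_{t=1}^k x_{σ(t)} (C(S_t) − C(S_{t−1})). -/

import Mathlib

open Finset

section
variable {k : ℕ} (σ : Equiv.Perm (Fin k))

/-- the chain sets -/
def Sσ (n : ℕ) : Finset (Fin k) :=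
  Finset.image σ (Finset.univ.filter (fun s : Fin k => (s : ℕ) < n))

lemma mem_Sσ (i : Fin k) (n : ℕ) : i ∈ Sσ σ n ↔ ((σ.symm i : Fin k) : ℕ) < n := by
  simp only [Sσ, mem_image, mem_filter, mem_univ, true_and]
  constructor
  · rintro ⟨s, hs, rfl⟩; simpa using hs
  · intro h; exact ⟨σ.symm i, h, σ.apply_symm_apply i⟩

lemma Sσ_zero : Sσ σ 0 = ∅ := by
  ext i; simp [mem_Sσ]

lemma Sσ_k : Sσ σ k = Finset.univ := by
  ext i; simp [mem_Sσ, (σ.symm i).isLt]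

lemma notmem_Sσ (t : Fin k) : σ t ∉ Sσ σ (t : ℕ) := by
  simp [mem_Sσ]

lemma Sσ_step (t : Fin k) : Sσ σ ((t : ℕ) + 1) = insert (σ t) (Sσ σ (t : ℕ)) := by
  ext i
  simp only [mem_Sσ, mem_insert]
  constructor
  · intro h
    rcases Nat.lt_succ_iff_lt_or_eq.mp h with h | h
    · exact Or.inr h
    · left
      have : σ.symm i = t := Fin.ext h
      rw [← this, σ.apply_symm_apply]
  · rintro (rfl | h)
    · simp
    · exact Nat.lt_succ_of_lt h

end

section
variable {k : ℕ} (σ : Equiv.Perm (Fin k)) (C : Finset (Fin k) → ℝ)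

/-- greedy weights -/
def wgt (i : Fin k) : ℝ := C (Sσ σ ((σ.symm i : ℕ) + 1)) - C (Sσ σ (σ.symm i : ℕ))

lemma wgt_apply (t : Fin k) : wgt σ C (σ t) = C (Sσ σ ((t : ℕ) + 1)) - C (Sσ σ (t : ℕ)) := by
  simp [wgt]

lemma wgt_le (hsub : ∀ A B : Finset (Fin k), C (A ∪ B) + C (A ∩ B) ≤ C A + C B)
    (hempty : C ∅ = 0) (S : Finset (Fin k)) :
    ∑ i ∈ S, wgt σ C i ≤ C S := by
  have key : ∀ n : ℕ, n ≤ k → ∑ i ∈ S ∩ Sσ σ n, wgt σ C i ≤ C (S ∩ Sσ σ n) := by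
    intro n hn
    induction n with
    | zero => simp [Sσ_zero, hempty]
    | succ m ih =>
      have hm : m < k := hn
      have ih' := ih (Nat.le_of_lt hm)
      set t : Fin k := ⟨m, hm⟩ with ht
      have hmt : (t : ℕ) = m := rfl
      rw [← hmt, Sσ_step σ t]
      by_cases hts : σ t ∈ S
      · have hins : S ∩ insert (σ t) (Sσ σ (t : ℕ)) = insert (σ t) (S ∩ Sσ σ (t : ℕ)) := by
          ext i; simp only [mem_inter, mem_insert]
          constructor
          · rintro ⟨h1, (h2 | h2)⟩
            · exact Or.inl h2
            · exact Or.inr ⟨h1, h2⟩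
          · rintro (rfl | ⟨h1, h2⟩)
            · exact ⟨hts, Or.inl rfl⟩
            · exact ⟨h1, Or.inr h2⟩
        rw [hins, Finset.sum_insert (fun h => notmem_Sσ σ t (mem_inter.mp h).2)]
        -- submodularity: A = insert (σ t) (S ∩ Sσ t), B = Sσ t
        have h2 := hsub (insert (σ t) (S ∩ Sσ σ (t : ℕ))) (Sσ σ (t : ℕ))
        have hU : insert (σ t) (S ∩ Sσ σ (t : ℕ)) ∪ Sσ σ (t : ℕ)
            = insert (σ t) (Sσ σ (t : ℕ)) := by
          ext i; simp only [mem_union, mem_insert, mem_inter]; tauto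
        have hI : insert (σ t) (S ∩ Sσ σ (t : ℕ)) ∩ Sσ σ (t : ℕ)
            = S ∩ Sσ σ (t : ℕ) := by
          have := notmem_Sσ σ t
          ext i; simp only [mem_inter, mem_insert]
          constructor
          · rintro ⟨(rfl | ⟨h1, h2⟩), h3⟩
            · exact absurd h3 this
            · exact ⟨h1, h2⟩
          · tauto
        rw [hU, hI, ← Sσ_step σ t] at h2
        rw [wgt_apply]
        linarith
      · have hins : S ∩ insert (σ t) (Sσ σ (t : ℕ)) = S ∩ Sσ σ (t : ℕ) := by
          ext i; simp only [mem_inter, mem_insert]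
          constructor
          · rintro ⟨h1, (rfl | h2)⟩
            · exact absurd h1 hts
            · exact ⟨h1, h2⟩
          · tauto
        rw [hins]; exact ih'
  have := key k le_rfl
  rwa [Sσ_k, Finset.inter_univ] at this

end

lemma abel_aux (z c : ℕ → ℝ) (hc0 : c 0 = 0) (N : ℕ) :
    ∑ n ∈ Finset.range (N+1), (z n - z (n+1)) * c n
      = -(z (N+1) * c N) + ∑ t ∈ Finset.range N, z (t+1) * (c (t+1) - c t) := by
  induction N with
  | zero => simp [hc0]
  | succ M ih =>
    rw [Finset.sum_range_succ, ih, Finset.sum_range_succ]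
    ring

/-- for submodular C with C(∅) = 0, the MOT value with Bernoulli
marginals equals the Lovász extension of C at (x₁,…,x_k). -/
theorem stmt_14 {k : ℕ} (C : Finset (Fin k) → ℝ)
    (hsub : ∀ A B : Finset (Fin k), C (A ∪ B) + C (A ∩ B) ≤ C A + C B)
    (hempty : C ∅ = 0)
    (x : Fin k → ℝ) (hx : ∀ i, 0 ≤ x i ∧ x i ≤ 1)
    (σ : Equiv.Perm (Fin k))
    (hsort : ∀ s t : Fin k, s ≤ t → x (σ t) ≤ x (σ s)) :
    sInf {v : ℝ | ∃ P : Finset (Fin k) → ℝ,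
        (∀ S, 0 ≤ P S) ∧ (∑ S : Finset (Fin k), P S) = 1 ∧
        (∀ i, ∑ S : Finset (Fin k), (if i ∈ S then P S else 0) = x i) ∧
        v = ∑ S : Finset (Fin k), P S * C S}
      = ∑ t : Fin k, x (σ t) *
          (C (Finset.image σ (Finset.univ.filter (fun s : Fin k => (s : ℕ) < (t : ℕ) + 1)))
            - C (Finset.image σ (Finset.univ.filter (fun s : Fin k => (s : ℕ) < (t : ℕ))))) := by
  classical
  show _ = ∑ t : Fin k, x (σ t) * (C (Sσ σ ((t : ℕ) + 1)) - C (Sσ σ (t : ℕ)))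
  set L : ℝ := ∑ t : Fin k, x (σ t) * (C (Sσ σ ((t : ℕ) + 1)) - C (Sσ σ (t : ℕ))) with hL
  -- the weight identity: ∑ i, wgt i * x i = L
  have hLw : ∑ i : Fin k, wgt σ C i * x i = L := by
    rw [hL, ← Equiv.sum_comp σ (fun i => wgt σ C i * x i)]
    refine Finset.sum_congr rfl fun t _ => ?_
    rw [wgt_apply]; ring
  -- LOWER BOUND: every feasible value is ≥ L
  have hlow : ∀ v ∈ {v : ℝ | ∃ P : Finset (Fin k) → ℝ,
      (∀ S, 0 ≤ P S) ∧ (∑ S : Finset (Fin k), P S) = 1 ∧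
      (∀ i, ∑ S : Finset (Fin k), (if i ∈ S then P S else 0) = x i) ∧
      v = ∑ S : Finset (Fin k), P S * C S}, L ≤ v := by
    rintro v ⟨P, hP0, _hP1, hPm, rfl⟩
    have step1 : L = ∑ S : Finset (Fin k), P S * ∑ i ∈ S, wgt σ C i := by
      rw [← hLw]
      have h1 : ∀ i, wgt σ C i * x i
          = ∑ S : Finset (Fin k), (if i ∈ S then P S * wgt σ C i else 0) := by
        intro i
        rw [← hPm i, Finset.mul_sum]
        refine Finset.sum_congr rfl fun S _ => ?_
        by_cases h : i ∈ S <;> simp [h, mul_comm]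
      simp_rw [h1]
      rw [Finset.sum_comm]
      refine Finset.sum_congr rfl fun S _ => ?_
      rw [Finset.mul_sum, Finset.sum_ite_mem, Finset.univ_inter]
    rw [step1]
    refine Finset.sum_le_sum fun S _ => ?_
    exact mul_le_mul_of_nonneg_left (wgt_le σ C hsub hempty S) (hP0 S)
  -- UPPER BOUND: L is attained by the chain distribution
  have hmemL : L ∈ {v : ℝ | ∃ P : Finset (Fin k) → ℝ,
      (∀ S, 0 ≤ P S) ∧ (∑ S : Finset (Fin k), P S) = 1 ∧
      (∀ i, ∑ S : Finset (Fin k), (if i ∈ S then P S else 0) = x i) ∧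
      v = ∑ S : Finset (Fin k), P S * C S} := by
    set y : ℕ → ℝ := fun n => if h : n < k then x (σ ⟨n, h⟩) else 0 with hy
    set z : ℕ → ℝ := fun n => if n = 0 then 1 else y (n - 1) with hz
    have hy0 : ∀ n, 0 ≤ y n := by
      intro n; rw [hy]; dsimp only
      split
      · exact (hx _).1
      · exact le_refl 0
    have hy1 : ∀ n, y n ≤ 1 := by
      intro n; rw [hy]; dsimp only
      split
      · exact (hx _).2
      · exact zero_le_one
    have hymono : ∀ n, y (n + 1) ≤ y n := by
      intro n; rw [hy]; dsimp only
      by_cases h1 : n + 1 < k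
      · have h2 : n < k := Nat.lt_of_succ_lt h1
        rw [dif_pos h1, dif_pos h2]
        exact hsort ⟨n, h2⟩ ⟨n + 1, h1⟩ (by simp)
      · rw [dif_neg h1]
        split
        · exact (hx _).1
        · exact le_refl 0
    have hzmono : ∀ n, z (n + 1) ≤ z n := by
      intro n; rw [hz]; dsimp only
      cases n with
      | zero => simpa using hy1 0
      | succ m =>
        simp only [Nat.succ_ne_zero, if_false, Nat.add_sub_cancel]
        exact hymono m
    have hzlast : z (k + 1) = 0 := by
      rw [hz]; simp [hy]
    have hzy : ∀ n, z (n + 1) = y n := by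
      intro n; rw [hz]; simp
    set q : ℕ → ℝ := fun n => z n - z (n + 1) with hq
    have hq0 : ∀ n, 0 ≤ q n := fun n => sub_nonneg.mpr (hzmono n)
    set P : Finset (Fin k) → ℝ :=
      fun S => ∑ n ∈ Finset.range (k + 1), if S = Sσ σ n then q n else 0 with hP
    refine ⟨P, ?_, ?_, ?_, ?_⟩
    · intro S
      refine Finset.sum_nonneg fun n _ => ?_
      split
      · exact hq0 n
      · exact le_refl 0
    · rw [hP]
      rw [Finset.sum_comm]
      have : ∀ n ∈ Finset.range (k + 1),
          ∑ S : Finset (Fin k), (if S = Sσ σ n then q n else 0) = q n := by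
        intro n _; simp
      rw [Finset.sum_congr rfl this, Finset.sum_range_sub' z, hzlast]
      simp [hz]
    · intro i
      rw [hP]
      have h0 : ∀ S : Finset (Fin k), (if i ∈ S then
            (∑ n ∈ Finset.range (k + 1), if S = Sσ σ n then q n else 0) else 0)
          = ∑ n ∈ Finset.range (k + 1), (if i ∈ S then if S = Sσ σ n then q n else 0 else 0) := by
        intro S; by_cases h : i ∈ S <;> simp [h]
      rw [Finset.sum_congr rfl fun S _ => h0 S]
      rw [Finset.sum_comm]
      have h1 : ∀ n ∈ Finset.range (k + 1),
          ∑ S : Finset (Fin k), (if i ∈ S then if S = Sσ σ n then q n else 0 else 0)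
            = if ((σ.symm i : Fin k) : ℕ) < n then q n else 0 := by
        intro n _
        have : ∀ S : Finset (Fin k),
            (if i ∈ S then if S = Sσ σ n then q n else 0 else 0)
              = if S = Sσ σ n then (if i ∈ Sσ σ n then q n else 0) else 0 := by
          intro S
          by_cases hS : S = Sσ σ n
          · subst hS; by_cases h : i ∈ Sσ σ n <;> simp [h]
          · simp [hS]
        rw [Finset.sum_congr rfl fun S _ => this S]
        rw [Finset.sum_ite_eq' Finset.univ (Sσ σ n) (fun _ => if i ∈ Sσ σ n then q n else 0)]
        simp [mem_Sσ]
      rw [Finset.sum_congr rfl h1]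
      have hr : ((σ.symm i : Fin k) : ℕ) < k := (σ.symm i).isLt
      set r : ℕ := ((σ.symm i : Fin k) : ℕ) with hrdef
      have h2 : ∑ n ∈ Finset.range (k + 1), (if r < n then q n else 0)
          = ∑ n ∈ Finset.Ico (r + 1) (k + 1), q n := by
        rw [Finset.sum_ite, Finset.sum_const_zero, add_zero]
        congr 1
        ext n
        simp only [Finset.mem_filter, Finset.mem_range, Finset.mem_Ico]
        constructor <;> intro h <;> omega
      rw [h2, Finset.sum_Ico_eq_sub _ (by omega : r + 1 ≤ k + 1),
        Finset.sum_range_sub' z, Finset.sum_range_sub' z]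
      have : z 0 - z (k + 1) - (z 0 - z (r + 1)) = z (r + 1) - z (k + 1) := by ring
      rw [this, hzlast, hzy, sub_zero, hy]
      dsimp only
      rw [dif_pos hr, show (⟨r, hr⟩ : Fin k) = σ.symm i from rfl, σ.apply_symm_apply]
    · rw [hP]
      have h1 : ∀ S : Finset (Fin k),
          (∑ n ∈ Finset.range (k + 1), if S = Sσ σ n then q n else 0) * C S
            = ∑ n ∈ Finset.range (k + 1), if S = Sσ σ n then q n * C (Sσ σ n) else 0 := by
        intro S
        rw [Finset.sum_mul]
        refine Finset.sum_congr rfl fun n _ => ?_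
        by_cases h : S = Sσ σ n
        · subst h; simp
        · simp [h]
      rw [Finset.sum_congr rfl fun S _ => h1 S, Finset.sum_comm]
      have h2 : ∀ n ∈ Finset.range (k + 1),
          ∑ S : Finset (Fin k), (if S = Sσ σ n then q n * C (Sσ σ n) else 0)
            = q n * C (Sσ σ n) := by
        intro n _; simp
      rw [Finset.sum_congr rfl h2]
      have habel := abel_aux z (fun n => C (Sσ σ n)) (by simp [Sσ_zero, hempty]) k
      simp only [hq]
      rw [habel, hzlast]
      simp only [neg_zero, zero_mul, neg_zero, zero_add]
      rw [hL, ← Fin.sum_univ_eq_sum_range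
        (fun n => z (n + 1) * (C (Sσ σ (n + 1)) - C (Sσ σ n))) k]
      refine Finset.sum_congr rfl fun t _ => ?_
      rw [hzy]
      have hyt : y (t : ℕ) = x (σ t) := by
        rw [hy]; dsimp only; rw [dif_pos t.isLt]
      rw [hyt]
  have hne : {v : ℝ | ∃ P : Finset (Fin k) → ℝ,
      (∀ S, 0 ≤ P S) ∧ (∑ S : Finset (Fin k), P S) = 1 ∧
      (∀ i, ∑ S : Finset (Fin k), (if i ∈ S then P S else 0) = x i) ∧
      v = ∑ S : Finset (Fin k), P S * C S}.Nonempty := ⟨L, hmemL⟩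
  have hbdd : BddBelow {v : ℝ | ∃ P : Finset (Fin k) → ℝ,
      (∀ S, 0 ≤ P S) ∧ (∑ S : Finset (Fin k), P S) = 1 ∧
      (∀ i, ∑ S : Finset (Fin k), (if i ∈ S then P S else 0) = x i) ∧
      v = ∑ S : Finset (Fin k), P S * C S} := ⟨L, hlow⟩
  exact le_antisymm (csInf_le hbdd hmemL) (le_csInf hne hlow)
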